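/- Let R be an integral domain whose characteristic does not divide n, and A = R[σ]/(σⁿ−1). Then the annihilator of n σ^{n−1} in A is zero, and consequently HH^i(A;A) = 0 for all odd i, HH⁰(A;A) ≅ A, and HH^{2k}(A;A) ≅ A/(nA) for k ≥ 1. In particular HH^*(A;A) ≅ R[x,z]/(xⁿ−1, nz) as graded rings with |x|=0, |z|=2. -/

import Mathlib

noncomputable section

open DirectSum

/-- The group ring `A = R[σ]/(σⁿ−1) = R[ℤ/nℤ]`. -/
abbrev CycA (R : Type) [CommRing R] (n : ℕ) : Type := AddMonoidAlgebra R (ZMod n)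

/-- The generator `σ` of the group ring. -/
def sig (R : Type) [CommRing R] (n : ℕ) : CycA R n := AddMonoidAlgebra.single (1 : ZMod n) 1

/-- The element `n·σ^(n-1)`. -/
def nsig (R : Type) [CommRing R] (n : ℕ) : CycA R n := (n : CycA R n) * (sig R n) ^ (n - 1)

/-- The differentials of the 2-periodic Hochschild cochain complex
`A →0→ A →(nσ^{n-1})→ A →0→ A → ⋯`; `cohD i : C^i → C^{i+1}`. -/
def cohD (R : Type) [CommRing R] (n : ℕ) (i : ℕ) : CycA R n →ₗ[R] CycA R n :=
  if Even i then 0 else LinearMap.mulLeft R (nsig R n)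

/-- The `i`-th Hochschild cohomology `HH^i(A;A)` of `A = R[ℤ/nℤ]`, computed as the
cohomology of the 2-periodic complex: `ker(d^i)/im(d^{i-1})`. -/
abbrev HHcoh (R : Type) [CommRing R] (n : ℕ) (i : ℕ) : Type :=
  LinearMap.ker (cohD R n i) ⧸
    (LinearMap.range (cohD R n (i - 1))).comap (LinearMap.ker (cohD R n i)).subtype

set_option linter.unusedSectionVars false

section Aux

variable (R : Type) [CommRing R] (n : ℕ)

lemma sig_pow (k : ℕ) : (sig R n) ^ k = AddMonoidAlgebra.single ((k : ZMod n)) 1 := by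
  rw [sig, AddMonoidAlgebra.single_pow, one_pow, nsmul_eq_mul, mul_one]

lemma sig_pow_n : (sig R n) ^ n = 1 := by
  rw [sig_pow, ZMod.natCast_self]; rfl

lemma natCast_mul_eq (x : CycA R n) : (n : CycA R n) * x = (n : R) • x := by
  rw [← nsmul_eq_mul, ← Nat.cast_smul_eq_nsmul R]

lemma cyc_nsmul_eq_zero [IsDomain R] (hn : (n : R) ≠ 0) (x : CycA R n) (h : (n : R) • x = 0) : x = 0 := by
  apply AddMonoidAlgebra.coeff_injective; ext a
  have h2 : ((n:R) • x).coeff a = (0 : CycA R n).coeff a := by rw [h]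
  simp only [AddMonoidAlgebra.coeff_smul, AddMonoidAlgebra.coeff_zero, Finsupp.smul_apply, smul_eq_mul, Finsupp.coe_zero, Pi.zero_apply] at h2 ⊢
  rcases mul_eq_zero.mp h2 with h3 | h3
  · exact absurd h3 hn
  · exact h3

lemma sig_mul_nsig (hn0 : n ≠ 0) : sig R n * nsig R n = (n : CycA R n) := by
  rw [nsig, mul_left_comm, ← pow_succ' (sig R n) (n-1), Nat.sub_add_cancel (Nat.one_le_iff_ne_zero.mpr hn0),
    sig_pow_n, mul_one]

lemma ker_nsig [IsDomain R] (hn : (n:R) ≠ 0) (hn0 : n ≠ 0) :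
    LinearMap.ker (LinearMap.mulLeft R (nsig R n)) = ⊥ := by
  rw [LinearMap.ker_eq_bot']
  intro x hx
  simp only [LinearMap.mulLeft_apply] at hx
  have h1 : (n : CycA R n) * x = 0 := by
    rw [← sig_mul_nsig R n hn0, mul_assoc, hx, mul_zero]
  rw [natCast_mul_eq] at h1
  exact cyc_nsmul_eq_zero R n hn x h1

lemma cohD_even {i : ℕ} (h : Even i) : cohD R n i = 0 := by simp [cohD, h]
lemma cohD_odd {i : ℕ} (h : ¬ Even i) : cohD R n i = LinearMap.mulLeft R (nsig R n) := by simp [cohD, h]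

lemma odd_subsingleton [IsDomain R] (hn : (n:R) ≠ 0) (hn0 : n ≠ 0) {i : ℕ} (h : ¬ Even i) :
    Subsingleton (HHcoh R n i) := by
  have hk : LinearMap.ker (cohD R n i) = ⊥ := by
    rw [cohD_odd R n h]; exact ker_nsig R n hn hn0
  haveI : Subsingleton ↥(LinearMap.ker (cohD R n i)) := by rw [hk]; infer_instance
  constructor
  intro a b
  obtain ⟨x, rfl⟩ := Submodule.Quotient.mk_surjective _ a
  obtain ⟨y, rfl⟩ := Submodule.Quotient.mk_surjective _ b
  rw [Subsingleton.elim x y]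

def equivZero : HHcoh R n 0 ≃ₗ[R] CycA R n :=
  (Submodule.quotEquivOfEqBot _ (by
      have h : cohD R n (0 - 1) = 0 := cohD_even R n (by decide)
      have h2 : LinearMap.range (cohD R n (0 - 1)) = ⊥ := by rw [h]; exact LinearMap.range_zero
      rw [h2, Submodule.comap_bot, Submodule.ker_subtype])).trans
    (LinearEquiv.ofTop _ (by rw [cohD_even R n Even.zero]; exact LinearMap.ker_zero))

lemma range_nsig (hn0 : n ≠ 0) :
    LinearMap.range (LinearMap.mulLeft R (nsig R n)) =
    LinearMap.range (LinearMap.mulLeft R ((n : CycA R n))) := by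
  have hs : sig R n ^ (n-1) * sig R n = 1 := by
    rw [← pow_succ, Nat.sub_add_cancel (Nat.one_le_iff_ne_zero.mpr hn0), sig_pow_n]
  ext y
  simp only [LinearMap.mem_range, LinearMap.mulLeft_apply]
  constructor
  · rintro ⟨x, rfl⟩
    exact ⟨sig R n ^ (n-1) * x, by rw [nsig, mul_assoc]⟩
  · rintro ⟨x, rfl⟩
    refine ⟨sig R n * x, ?_⟩
    have : nsig R n * (sig R n * x) = (sig R n ^ (n-1) * sig R n) * ((n : CycA R n) * x) := by
      rw [nsig]; ring
    rw [this, hs, one_mul]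

def equivEven (hn0 : n ≠ 0) (i : ℕ) (h0 : i ≠ 0) (he : Even i) :
    HHcoh R n i ≃ₗ[R] (CycA R n ⧸ LinearMap.range (LinearMap.mulLeft R ((n : CycA R n)))) := by
  have hodd : ¬ Even (i - 1) := by
    rw [Nat.even_sub (Nat.one_le_iff_ne_zero.mpr h0)]
    simp [he]
  have hker : LinearMap.ker (cohD R n i) = ⊤ := by
    rw [cohD_even R n he]; exact LinearMap.ker_zero
  refine (Submodule.Quotient.equiv _ (LinearMap.range (LinearMap.mulLeft R (nsig R n)))
    (LinearEquiv.ofTop _ hker) ?_).trans (Submodule.quotEquivOfEq _ _ (range_nsig R n hn0))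
  ext y
  simp only [Submodule.mem_map, Submodule.mem_comap]
  constructor
  · rintro ⟨⟨x, hx⟩, hx2, rfl⟩
    rw [cohD_odd R n hodd] at hx2
    exact hx2
  · intro hy
    exact ⟨⟨y, hker ▸ Submodule.mem_top⟩, by rw [cohD_odd R n hodd] at *; exact hy, rfl⟩

set_option linter.unusedSectionVars false

/-- the ideal (x^n - 1, n z) -/
def Iq : Ideal (MvPolynomial (Fin 2) R) :=
  Ideal.span {(MvPolynomial.X 0 : MvPolynomial (Fin 2) R) ^ n - 1,
    (n : MvPolynomial (Fin 2) R) * MvPolynomial.X 1}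

abbrev AQ : Type := CycA R n ⧸ LinearMap.range (LinearMap.mulLeft R ((n : CycA R n)))
abbrev Qt : Type := CycA R n × (ℕ →₀ AQ R n)

/-- evaluation x ↦ C σ, z ↦ X -/
def Fa : MvPolynomial (Fin 2) R →ₐ[R] Polynomial (CycA R n) :=
  MvPolynomial.aeval ![Polynomial.C (sig R n), Polynomial.X]

def toFinsuppL : Polynomial (CycA R n) →ₗ[R] (ℕ →₀ CycA R n) where
  toFun p := p.toFinsupp.coeff
  map_add' p q := by rw [Polynomial.toFinsupp_add]; rfl
  map_smul' r p := by rw [Polynomial.toFinsupp_smul]; rfl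

def theta2 : Polynomial (CycA R n) →ₗ[R] (ℕ →₀ AQ R n) :=
  (Finsupp.mapRange.linearMap
      (LinearMap.range (LinearMap.mulLeft R ((n : CycA R n)))).mkQ) ∘ₗ
    (Finsupp.lcomapDomain Nat.succ Nat.succ_injective) ∘ₗ toFinsuppL R n

lemma theta2_apply (p : Polynomial (CycA R n)) (j : ℕ) :
    theta2 R n p j = Submodule.Quotient.mk (p.coeff (j+1)) := rfl

def theta : Polynomial (CycA R n) →ₗ[R] Qt R n :=
  LinearMap.prod ((Polynomial.lcoeff (CycA R n) 0).restrictScalars R) (theta2 R n)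

def Gm : MvPolynomial (Fin 2) R →ₗ[R] Qt R n := theta R n ∘ₗ (Fa R n).toLinearMap

lemma Fa_monomial (d : Fin 2 →₀ ℕ) (r : R) :
    Fa R n (MvPolynomial.monomial d r) =
      Polynomial.C (AddMonoidAlgebra.single (((d 0 : ℕ) : ZMod n)) r) * Polynomial.X ^ (d 1) := by
  rw [Fa, MvPolynomial.aeval_monomial, Finsupp.prod_fintype _ _ (fun i => pow_zero _),
    Fin.prod_univ_two]
  simp only [Matrix.cons_val_zero, Matrix.cons_val_one, Matrix.head_cons]
  rw [← Polynomial.C_pow]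
  have h1 : (AddMonoidAlgebra.single (((d 0 : ℕ) : ZMod n)) r : CycA R n) = r • sig R n ^ (d 0) := by
    rw [sig_pow, AddMonoidAlgebra.smul_single', mul_one]
  rw [h1, ← Polynomial.smul_C, smul_mul_assoc, Algebra.smul_def]

lemma theta_CX (c : CycA R n) (b : ℕ) :
    theta R n (Polynomial.C c * Polynomial.X ^ b) =
      if b = 0 then (c, 0)
      else (0, Finsupp.single (b-1) (Submodule.Quotient.mk c)) := by
  rw [Polynomial.C_mul_X_pow_eq_monomial]
  cases b with
  | zero =>
    rw [if_pos rfl]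
    refine Prod.ext ?_ ?_
    · simp [theta, LinearMap.prod_apply, Function.prod, Polynomial.lcoeff_apply, Polynomial.coeff_monomial]
    · ext j
      simp [theta, LinearMap.prod_apply, Function.prod, theta2_apply, Polynomial.coeff_monomial]
  | succ j =>
    rw [if_neg (Nat.succ_ne_zero j)]
    refine Prod.ext ?_ ?_
    · simp [theta, LinearMap.prod_apply, Function.prod, Polynomial.lcoeff_apply, Polynomial.coeff_monomial]
    · ext k
      simp only [theta, LinearMap.prod_apply, Function.prod, theta2_apply, Polynomial.coeff_monomial,
        Finsupp.single_apply, Nat.succ_sub_one, apply_ite (Submodule.Quotient.mk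
          (p := LinearMap.range (LinearMap.mulLeft R ((n : CycA R n))))),
        Submodule.Quotient.mk_zero, Nat.add_right_cancel_iff]

lemma Gm_monomial (d : Fin 2 →₀ ℕ) (r : R) :
    Gm R n (MvPolynomial.monomial d r) =
      if d 1 = 0 then (AddMonoidAlgebra.single (((d 0 : ℕ) : ZMod n)) r, 0)
      else (0, Finsupp.single (d 1 - 1)
        (Submodule.Quotient.mk (AddMonoidAlgebra.single (((d 0 : ℕ) : ZMod n)) r))) := by
  rw [Gm, LinearMap.comp_apply, AlgHom.toLinearMap_apply, Fa_monomial, theta_CX]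

section L
variable [NeZero n]

lemma xpow_n : (Ideal.Quotient.mk (Iq R n) (MvPolynomial.X 0)) ^ n = 1 := by
  have h : Ideal.Quotient.mk (Iq R n) ((MvPolynomial.X 0 : MvPolynomial (Fin 2) R) ^ n - 1) = 0 :=
    Ideal.Quotient.eq_zero_iff_mem.mpr (Ideal.subset_span (Set.mem_insert _ _))
  rw [map_sub, map_pow, map_one, sub_eq_zero] at h
  exact h

lemma nz_zero :
    (n : MvPolynomial (Fin 2) R ⧸ Iq R n) * Ideal.Quotient.mk (Iq R n) (MvPolynomial.X 1) = 0 := by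
  have h : Ideal.Quotient.mk (Iq R n)
      ((n : MvPolynomial (Fin 2) R) * MvPolynomial.X 1) = 0 :=
    Ideal.Quotient.eq_zero_iff_mem.mpr (Ideal.subset_span (Set.mem_insert_of_mem _ rfl))
  rw [map_mul, map_natCast] at h
  exact h

def mhom : Multiplicative (ZMod n) →* (MvPolynomial (Fin 2) R ⧸ Iq R n) where
  toFun a := (Ideal.Quotient.mk (Iq R n) (MvPolynomial.X 0)) ^ (Multiplicative.toAdd a).val
  map_one' := by
    show _ ^ (Multiplicative.toAdd (1 : Multiplicative (ZMod n))).val = 1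
    rw [toAdd_one, ZMod.val_zero, pow_zero]
  map_mul' a b := by
    show _ ^ (Multiplicative.toAdd (a * b)).val = _ ^ _ * _ ^ _
    rw [toAdd_mul, ZMod.val_add, ← pow_eq_pow_mod _ (xpow_n R n), ← pow_add]

def ella : CycA R n →ₐ[R] (MvPolynomial (Fin 2) R ⧸ Iq R n) :=
  AddMonoidAlgebra.lift R (MvPolynomial (Fin 2) R ⧸ Iq R n) (ZMod n) (mhom R n)

lemma ella_single (a : ZMod n) (r : R) :
    ella R n (AddMonoidAlgebra.single a r) =
      r • (Ideal.Quotient.mk (Iq R n) (MvPolynomial.X 0)) ^ a.val := by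
  rw [ella, AddMonoidAlgebra.lift_single]
  rfl

def Lj (j : ℕ) : AQ R n →ₗ[R] (MvPolynomial (Fin 2) R ⧸ Iq R n) :=
  Submodule.liftQ _
    ((LinearMap.mulLeft R ((Ideal.Quotient.mk (Iq R n) (MvPolynomial.X 1)) ^ (j+1))) ∘ₗ
      (ella R n).toLinearMap)
    (by
      rintro x ⟨a, rfl⟩
      simp only [LinearMap.mem_ker, LinearMap.comp_apply, AlgHom.toLinearMap_apply,
        LinearMap.mulLeft_apply, map_mul, map_natCast]
      set z := Ideal.Quotient.mk (Iq R n) (MvPolynomial.X 1)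
      have : z ^ (j+1) * ((n : MvPolynomial (Fin 2) R ⧸ Iq R n) * ella R n a) =
          ((n : MvPolynomial (Fin 2) R ⧸ Iq R n) * z) * (z ^ j * ella R n a) := by ring
      rw [this, nz_zero, zero_mul])

lemma Lj_mk (j : ℕ) (c : CycA R n) :
    Lj R n j (Submodule.Quotient.mk c) =
      (Ideal.Quotient.mk (Iq R n) (MvPolynomial.X 1)) ^ (j+1) * ella R n c := by
  rw [Lj, Submodule.liftQ_apply]
  rfl

def Lmap : Qt R n →ₗ[R] (MvPolynomial (Fin 2) R ⧸ Iq R n) :=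
  LinearMap.coprod (ella R n).toLinearMap (Finsupp.lsum R (fun j => Lj R n j))

lemma Lmap_fst (a : CycA R n) : Lmap R n (a, 0) = ella R n a := by
  simp [Lmap]

lemma Lmap_snd (g : ℕ →₀ AQ R n) :
    Lmap R n (0, g) = Finsupp.lsum R (fun j => Lj R n j) g := by
  simp [Lmap]

lemma L_G (p : MvPolynomial (Fin 2) R) :
    Lmap R n (Gm R n p) = Ideal.Quotient.mk (Iq R n) p := by
  induction p using MvPolynomial.induction_on' with
  | add p q hp hq => rw [map_add, map_add, hp, hq, map_add]
  | monomial d r =>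
    rw [Gm_monomial]
    have hmk : Ideal.Quotient.mk (Iq R n) (MvPolynomial.monomial d r) =
        r • ((Ideal.Quotient.mk (Iq R n) (MvPolynomial.X 0)) ^ (d 0) *
          (Ideal.Quotient.mk (Iq R n) (MvPolynomial.X 1)) ^ (d 1)) := by
      rw [MvPolynomial.monomial_eq, Finsupp.prod_fintype _ _ (fun i => pow_zero _),
        Fin.prod_univ_two, map_mul, map_mul, map_pow, map_pow]
      rw [show (Ideal.Quotient.mk (Iq R n)) (MvPolynomial.C r) = algebraMap R _ r from rfl,
        ← Algebra.smul_def]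
    have hxv : (Ideal.Quotient.mk (Iq R n) (MvPolynomial.X 0)) ^ (((d 0 : ℕ) : ZMod n)).val =
        (Ideal.Quotient.mk (Iq R n) (MvPolynomial.X 0)) ^ (d 0) := by
      rw [ZMod.val_natCast, ← pow_eq_pow_mod _ (xpow_n R n)]
    by_cases hd : d 1 = 0
    · rw [if_pos hd, Lmap_fst, ella_single, hxv, hmk, hd, pow_zero, mul_one]
    · rw [if_neg hd]
      obtain ⟨b, hb⟩ : ∃ b, d 1 = b + 1 := ⟨d 1 - 1, by omega⟩
      rw [Lmap_snd, Finsupp.lsum_single, Lj_mk, ella_single, hxv, hmk, hb,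
        Nat.add_sub_cancel, mul_smul_comm]
      exact congrArg _ (mul_comm _ _)

end L

lemma Fa_relx : Fa R n ((MvPolynomial.X 0 : MvPolynomial (Fin 2) R) ^ n - 1) = 0 := by
  have : Fa R n (MvPolynomial.X 0) = Polynomial.C (sig R n) := by
    simp [Fa]
  rw [map_sub, map_pow, map_one, this, ← Polynomial.C_pow, sig_pow_n, Polynomial.C_1, sub_self]

lemma Gm_Iq_zero (p : MvPolynomial (Fin 2) R) (hp : p ∈ Iq R n) : Gm R n p = 0 := by
  obtain ⟨u, v, rfl⟩ := Ideal.mem_span_pair.mp hp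
  rw [map_add]
  have h1 : Gm R n (u * ((MvPolynomial.X 0 : MvPolynomial (Fin 2) R) ^ n - 1)) = 0 := by
    rw [Gm, LinearMap.comp_apply, AlgHom.toLinearMap_apply, map_mul, Fa_relx, mul_zero, map_zero]
  have h2 : Gm R n (v * ((n : MvPolynomial (Fin 2) R) * MvPolynomial.X 1)) = 0 := by
    rw [Gm, LinearMap.comp_apply, AlgHom.toLinearMap_apply, map_mul]
    have hFx : Fa R n ((n : MvPolynomial (Fin 2) R) * MvPolynomial.X 1) =
        Polynomial.C ((n : CycA R n)) * Polynomial.X := by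
      simp [Fa]
    rw [hFx]
    refine Prod.ext ?_ ?_
    · rw [Prod.fst_zero]
      have hth : ((theta R n) (Fa R n v * (Polynomial.C ((n : CycA R n)) * Polynomial.X))).1
          = (Fa R n v * (Polynomial.C ((n : CycA R n)) * Polynomial.X)).coeff 0 := rfl
      rw [hth, Polynomial.mul_coeff_zero, Polynomial.mul_coeff_zero, Polynomial.coeff_X_zero,
        mul_zero, mul_zero]
    · rw [Prod.snd_zero]
      ext j
      have hth : ((theta R n) (Fa R n v * (Polynomial.C ((n : CycA R n)) * Polynomial.X))).2 j
          = Submodule.Quotient.mk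
              ((Fa R n v * (Polynomial.C ((n : CycA R n)) * Polynomial.X)).coeff (j+1)) := rfl
      rw [hth, Finsupp.coe_zero, Pi.zero_apply]
      have : (Fa R n v * (Polynomial.C ((n : CycA R n)) * Polynomial.X)).coeff (j+1) =
          (n : CycA R n) * ((Fa R n v * Polynomial.X).coeff (j+1)) := by
        rw [mul_left_comm, Polynomial.coeff_C_mul]
      rw [this]
      exact (Submodule.Quotient.mk_eq_zero _).mpr ⟨_, rfl⟩
  rw [h1, h2, add_zero]

lemma ker_Gm [NeZero n] : LinearMap.ker (Gm R n) = (Iq R n).restrictScalars R := by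
  ext p
  constructor
  · intro h
    have h2 := L_G R n p
    rw [LinearMap.mem_ker.mp h, map_zero] at h2
    exact Ideal.Quotient.eq_zero_iff_mem.mp h2.symm
  · intro h
    exact LinearMap.mem_ker.mpr (Gm_Iq_zero R n p h)

lemma mem1 [NeZero n] (f : CycA R n) :
    ((f, 0) : Qt R n) ∈ LinearMap.range (Gm R n) := by
  induction f using AddMonoidAlgebra.induction with
  | zero => exact zero_mem _
  | single_add a r f _ _ ih =>
    have hs : ((AddMonoidAlgebra.single a r : CycA R n), (0 : ℕ →₀ AQ R n)) ∈
        LinearMap.range (Gm R n) := by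
      refine ⟨MvPolynomial.monomial (Finsupp.single 0 a.val) r, ?_⟩
      rw [Gm_monomial]
      rw [if_pos (by simp [Finsupp.single_apply])]
      simp [Finsupp.single_apply, ZMod.natCast_rightInverse a]
    have := add_mem hs ih
    simpa using this

lemma mem2 [NeZero n] (j : ℕ) (c : CycA R n) :
    ((0, Finsupp.single j (Submodule.Quotient.mk c)) : Qt R n) ∈
      LinearMap.range (Gm R n) := by
  induction c using AddMonoidAlgebra.induction with
  | zero =>
    rw [show Submodule.Quotient.mk (0 : CycA R n) = (0 : AQ R n) from rfl,
      Finsupp.single_zero]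
    exact zero_mem _
  | single_add a r f _ _ ih =>
    have hs : ((0, Finsupp.single j (Submodule.Quotient.mk
        (AddMonoidAlgebra.single a r : CycA R n))) : Qt R n) ∈
        LinearMap.range (Gm R n) := by
      refine ⟨MvPolynomial.monomial (Finsupp.single 0 a.val + Finsupp.single 1 (j+1)) r, ?_⟩
      rw [Gm_monomial]
      have hd0 : (Finsupp.single (0 : Fin 2) a.val + Finsupp.single (1 : Fin 2) (j+1)) 0
          = a.val := by simp [Finsupp.single_apply]
      have hd1 : (Finsupp.single (0 : Fin 2) a.val + Finsupp.single (1 : Fin 2) (j+1)) 1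
          = j + 1 := by simp [Finsupp.single_apply]
      rw [hd0, hd1, if_neg (Nat.succ_ne_zero j), Nat.add_sub_cancel,
        ZMod.natCast_rightInverse a]
    have := add_mem hs ih
    rw [Prod.mk_add_mk, add_zero, ← Finsupp.single_add, ← Submodule.Quotient.mk_add] at this
    exact this

lemma Gm_surj [NeZero n] : Function.Surjective (Gm R n) := by
  intro q
  obtain ⟨f, g⟩ := q
  have h2 : ((0 : CycA R n), g) ∈ LinearMap.range (Gm R n) := by
    induction g using Finsupp.induction with
    | zero => exact zero_mem _
    | single_add j y g _ _ ih =>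
      obtain ⟨c, rfl⟩ := Submodule.Quotient.mk_surjective _ y
      have := add_mem (mem2 R n j c) ih
      rw [Prod.mk_add_mk, add_zero] at this
      exact this
  have := add_mem (mem1 R n f) h2
  rw [Prod.mk_add_mk, add_zero, zero_add] at this
  exact this

def eS [NeZero n] : (MvPolynomial (Fin 2) R ⧸ Iq R n) ≃ₗ[R] Qt R n :=
  (((Submodule.Quotient.restrictScalarsEquiv R (Iq R n)).symm.trans
    (Submodule.quotEquivOfEq _ _ (ker_Gm R n).symm)).trans
    (LinearMap.quotKerEquivOfSurjective _ (Gm_surj R n)))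

section Assemble

def equivZero' (i : ℕ) (h : i = 0) : HHcoh R n i ≃ₗ[R] CycA R n := by
  subst h; exact equivZero R n

def ucomp (hn0 : n ≠ 0) (i : ℕ) : HHcoh R n i →ₗ[R] Qt R n :=
  if he : Even i then
    (if h0 : i = 0 then
      (LinearMap.inl R (CycA R n) (ℕ →₀ AQ R n)) ∘ₗ (equivZero' R n i h0).toLinearMap
     else
      ((LinearMap.inr R (CycA R n) (ℕ →₀ AQ R n)) ∘ₗ (Finsupp.lsingle (i/2 - 1))) ∘ₗ
        (equivEven R n hn0 i h0 he).toLinearMap)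
  else 0

lemma ucomp_zero (hn0 : n ≠ 0) :
    ucomp R n hn0 0 = (LinearMap.inl R (CycA R n) (ℕ →₀ AQ R n)) ∘ₗ
      (equivZero R n).toLinearMap := by
  rw [ucomp, dif_pos Even.zero, dif_pos rfl]
  rfl

lemma ucomp_even (hn0 : n ≠ 0) (i : ℕ) (h0 : i ≠ 0) (he : Even i) :
    ucomp R n hn0 i = ((LinearMap.inr R (CycA R n) (ℕ →₀ AQ R n)) ∘ₗ
      (Finsupp.lsingle (i/2 - 1))) ∘ₗ (equivEven R n hn0 i h0 he).toLinearMap := by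
  rw [ucomp, dif_pos he, dif_neg h0]

lemma ucomp_odd (hn0 : n ≠ 0) (i : ℕ) (h : ¬ Even i) : ucomp R n hn0 i = 0 := dif_neg h

def uMap (hn0 : n ≠ 0) : (⨁ i : ℕ, HHcoh R n i) →ₗ[R] Qt R n :=
  DirectSum.toModule R ℕ _ (ucomp R n hn0)

def vMap (hn0 : n ≠ 0) : Qt R n →ₗ[R] (⨁ i : ℕ, HHcoh R n i) :=
  LinearMap.coprod
    ((DirectSum.lof R ℕ (fun i => HHcoh R n i) 0) ∘ₗ (equivZero R n).symm.toLinearMap)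
    (Finsupp.lsum R fun k =>
      (DirectSum.lof R ℕ (fun i => HHcoh R n i) (2*(k+1))) ∘ₗ
        (equivEven R n hn0 (2*(k+1)) (by omega) ⟨k+1, by ring⟩).symm.toLinearMap)

lemma uv (hn0 : n ≠ 0) : (uMap R n hn0) ∘ₗ (vMap R n hn0) = LinearMap.id := by
  refine LinearMap.prod_ext ?_ ?_
  · apply LinearMap.ext; intro a
    simp [vMap, uMap, ucomp_zero, DirectSum.toModule_lof]
  · apply Finsupp.lhom_ext
    intro j y
    simp [vMap, uMap, DirectSum.toModule_lof, ucomp_even R n hn0 (2*(j+1)) (by omega) ⟨j+1, by ring⟩,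
      Nat.mul_div_cancel_left, show (2*(j+1))/2 - 1 = j by omega]

lemma vu [IsDomain R] (hn : (n:R) ≠ 0) (hn0 : n ≠ 0) :
    (vMap R n hn0) ∘ₗ (uMap R n hn0) = LinearMap.id := by
  refine DirectSum.linearMap_ext R fun i => LinearMap.ext fun x => ?_
  simp only [LinearMap.comp_apply, uMap, DirectSum.toModule_lof, LinearMap.id_apply]
  by_cases he : Even i
  · by_cases h0 : i = 0
    · subst h0
      rw [ucomp_zero]
      simp [vMap]
    · obtain ⟨k, hk⟩ : ∃ k, i = 2*(k+1) := by
        rcases he with ⟨m, hm⟩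
        exact ⟨m - 1, by omega⟩
      subst hk
      rw [ucomp_even R n hn0 (2*(k+1)) h0 he]
      simp [vMap, show (2*(k+1))/2 - 1 = k by omega]
  · rw [ucomp_odd R n hn0 i he]
    haveI := odd_subsingleton R n hn hn0 he
    rw [Subsingleton.elim x 0]
    simp

def bigEquiv [IsDomain R] (hn : (n:R) ≠ 0) (hn0 : n ≠ 0) [NeZero n] :
    (⨁ i : ℕ, HHcoh R n i) ≃ₗ[R] (MvPolynomial (Fin 2) R ⧸ Iq R n) :=
  ((by exact LinearEquiv.ofLinear (uMap R n hn0) (vMap R n hn0) (uv R n hn0) (vu R n hn hn0) :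
    (⨁ i : ℕ, HHcoh R n i) ≃ₗ[R] Qt R n)).trans (eS R n).symm

end Assemble

end Aux

/-
STATEMENT 5: Let R be an integral domain whose characteristic does not divide n, and
A = R[σ]/(σⁿ−1).  Then the annihilator of nσ^{n−1} in A is zero, and consequently
HH^i(A;A) = 0 for all odd i, HH⁰(A;A) ≅ A, and HH^{2k}(A;A) ≅ A/(nA) for k ≥ 1.
In particular HH^*(A;A) ≅ R[x,z]/(xⁿ−1, nz) as graded rings with |x| = 0, |z| = 2
(here recorded additively: the direct sum of all the cohomology groups is isomorphic,
as an R-module, to R[x,z]/(xⁿ−1, nz); the multiplicative structure, i.e. the cup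
product, is induced by multiplication in A, cf. STATEMENT 7).
-/
theorem hochschild_cohomology_cyclic_integral_domain
    (R : Type) [CommRing R] [IsDomain R] (n : ℕ) (hchar : ¬ (ringChar R ∣ n)) :
    LinearMap.ker (LinearMap.mulLeft R (nsig R n)) = ⊥ ∧
    (∀ k : ℕ, Subsingleton (HHcoh R n (2 * k + 1))) ∧
    Nonempty (HHcoh R n 0 ≃ₗ[R] CycA R n) ∧
    (∀ k : ℕ, 1 ≤ k →
      Nonempty (HHcoh R n (2 * k) ≃ₗ[R]
        (CycA R n ⧸ LinearMap.range (LinearMap.mulLeft R ((n : CycA R n)))))) ∧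
    Nonempty ((⨁ i : ℕ, HHcoh R n i) ≃ₗ[R]
      (MvPolynomial (Fin 2) R ⧸
        Ideal.span {(MvPolynomial.X 0 : MvPolynomial (Fin 2) R) ^ n - 1,
          (n : MvPolynomial (Fin 2) R) * MvPolynomial.X 1})) := by
  have hn0 : n ≠ 0 := fun h => hchar (h ▸ dvd_zero _)
  have hn : (n : R) ≠ 0 := fun h => hchar ((ringChar.spec R n).mp h)
  haveI : NeZero n := ⟨hn0⟩
  refine ⟨ker_nsig R n hn hn0, fun k => odd_subsingleton R n hn hn0 ?_, ⟨equivZero R n⟩,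
    fun k hk => ⟨equivEven R n hn0 (2*k) (by omega) ⟨k, by ring⟩⟩, ⟨bigEquiv R n hn hn0⟩⟩
  exact (Nat.not_even_iff_odd).mpr ⟨k, rfl⟩

end
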